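/- arXiv:2303.09994 — 3 statements merged into one kernel-verified Lean document; each statement's English description precedes it below -/
import Mathlib

section
/- Let n ≥ 1, let E : [0, ∞) → ℝⁿ be differentiable, suppose there exists B ≥ 0 with ‖E′(t)‖ ≤ B for all t ≥ 0, and suppose ∫_0^∞ ‖E(t)‖² dt < ∞. Then E(t) → 0 as t → ∞. -/
open MeasureTheory Filter

/-- If `E : [0,∞) → ℝⁿ` is differentiable with uniformly bounded derivative
and is square-integrable on `[0,∞)`, then `E(t) → 0` as `t → ∞` (Barbalat-type lemma). -/
theorem stmt_10 (n : ℕ) (hn : 1 ≤ n)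
    (E E' : ℝ → EuclideanSpace ℝ (Fin n))
    (hderiv : ∀ t ∈ Set.Ici (0 : ℝ), HasDerivAt E (E' t) t)
    (B : ℝ) (hB : 0 ≤ B)
    (hbound : ∀ t ∈ Set.Ici (0 : ℝ), ‖E' t‖ ≤ B)
    (hL2 : IntegrableOn (fun t : ℝ => ‖E t‖ ^ 2) (Set.Ici 0)) :
    Tendsto E atTop (nhds 0) := by
  by_contra hnot
  rw [Metric.tendsto_atTop] at hnot
  push_neg at hnot
  obtain ⟨ε, hε, hcl⟩ := hnot
  set B₀ : ℝ := B + 1 with hB₀def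
  have hB₀ : 0 < B₀ := by linarith
  set δ : ℝ := ε / (2 * B₀) with hδdef
  have hδ : 0 < δ := div_pos hε (by linarith)
  have hBδ : B₀ * δ = ε / 2 := by
    field_simp [hδdef]
    rw [hδdef]
    field_simp
  -- Lipschitz bound on [0,∞)
  have hlip : ∀ s ∈ Set.Ici (0:ℝ), ∀ t ∈ Set.Ici (0:ℝ), ‖E t - E s‖ ≤ B₀ * ‖t - s‖ := by
    intro s hs t ht
    exact (convex_Ici 0).norm_image_sub_le_of_norm_hasDerivWithin_le
      (fun x hx => (hderiv x hx).hasDerivWithinAt)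
      (fun x hx => (hbound x hx).trans (by linarith)) hs ht
  -- choose points of large norm
  choose u hu1 hu2 using fun T : ℝ => hcl (max T 0)
  have hu0 : ∀ T, (0:ℝ) ≤ u T := fun T => le_trans (le_max_right T 0) (hu1 T)
  have huT : ∀ T, T ≤ u T := fun T => le_trans (le_max_left T 0) (hu1 T)
  have huε : ∀ T, ε ≤ ‖E (u T)‖ := by
    intro T
    have := hu2 T
    rwa [dist_zero_right] at this
  -- interval integrability
  have hII : ∀ p q : ℝ, 0 ≤ p → p ≤ q →
      IntervalIntegrable (fun t : ℝ => ‖E t‖ ^ 2) volume p q := by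
    intro p q hp hpq
    apply IntegrableOn.intervalIntegrable
    rw [Set.uIcc_of_le hpq]
    exact hL2.mono_set (fun x hx => le_trans hp hx.1)
  -- lower bound on each window
  have hwin : ∀ T : ℝ, (ε/2)^2 * δ ≤ ∫ x in (u T)..(u T + δ), ‖E x‖ ^ 2 := by
    intro T
    have hlb : ∀ x ∈ Set.Icc (u T) (u T + δ), (ε/2)^2 ≤ ‖E x‖ ^ 2 := by
      intro x hx
      have hx0 : (0:ℝ) ≤ x := le_trans (hu0 T) hx.1
      have h1 : ‖E x - E (u T)‖ ≤ B₀ * ‖x - u T‖ := hlip (u T) (hu0 T) x hx0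
      have h2 : ‖x - u T‖ ≤ δ := by
        rw [Real.norm_eq_abs, abs_of_nonneg (by linarith [hx.1])]
        linarith [hx.2]
      have h3 : ‖E x - E (u T)‖ ≤ ε / 2 := by
        calc ‖E x - E (u T)‖ ≤ B₀ * ‖x - u T‖ := h1
          _ ≤ B₀ * δ := by nlinarith
          _ = ε / 2 := hBδ
      have h4 : ε / 2 ≤ ‖E x‖ := by
        have := norm_sub_norm_le (E (u T)) (E x)
        have h5 : ‖E (u T) - E x‖ = ‖E x - E (u T)‖ := norm_sub_rev _ _
        have h6 := huε T
        linarith [this, h5 ▸ this]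
      have h7 : (0:ℝ) ≤ ε / 2 := by linarith
      exact pow_le_pow_left₀ h7 h4 2
    have hle : u T ≤ u T + δ := by linarith
    calc (ε/2)^2 * δ = ∫ _x in (u T)..(u T + δ), (ε/2)^2 := by
          rw [intervalIntegral.integral_const, smul_eq_mul]
          ring
      _ ≤ ∫ x in (u T)..(u T + δ), ‖E x‖ ^ 2 :=
          intervalIntegral.integral_mono_on hle intervalIntegrable_const
            (hII (u T) (u T + δ) (hu0 T) hle) hlb
  -- the window integrals tend to 0
  have hIoi : IntegrableOn (fun t : ℝ => ‖E t‖ ^ 2) (Set.Ioi 0) :=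
    hL2.mono_set Set.Ioi_subset_Ici_self
  have hu_top : Tendsto u atTop atTop := tendsto_atTop_mono huT tendsto_id
  have huδ_top : Tendsto (fun T => u T + δ) atTop atTop :=
    tendsto_atTop_add_const_right _ δ hu_top
  have h1 := intervalIntegral_tendsto_integral_Ioi 0 hIoi hu_top
  have h2 := intervalIntegral_tendsto_integral_Ioi 0 hIoi huδ_top
  have hdiff : Tendsto (fun T => (∫ x in (0:ℝ)..(u T + δ), ‖E x‖ ^ 2)
      - ∫ x in (0:ℝ)..(u T), ‖E x‖ ^ 2) atTop (nhds 0) := by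
    have := h2.sub h1
    simpa using this
  have heq : ∀ T, (∫ x in (0:ℝ)..(u T + δ), ‖E x‖ ^ 2)
      - (∫ x in (0:ℝ)..(u T), ‖E x‖ ^ 2) = ∫ x in (u T)..(u T + δ), ‖E x‖ ^ 2 := by
    intro T
    have hadd := intervalIntegral.integral_add_adjacent_intervals
      (hII 0 (u T) le_rfl (hu0 T))
      (hII (u T) (u T + δ) (hu0 T) (by linarith))
    linarith [hadd]
  have hge : ∀ T, (ε/2)^2 * δ ≤ (∫ x in (0:ℝ)..(u T + δ), ‖E x‖ ^ 2)
      - ∫ x in (0:ℝ)..(u T), ‖E x‖ ^ 2 := by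
    intro T
    rw [heq T]
    exact hwin T
  have hle0 : (ε/2)^2 * δ ≤ 0 := ge_of_tendsto' hdiff hge
  have : 0 < (ε/2)^2 * δ := mul_pos (pow_pos (by linarith) 2) hδ
  linarith
end

section
/- Let Δ > 0, let U : ℝ → ℝ be integrable on every compact interval with U(τ) ≥ 0 for all τ, and let (V^r)_{r∈ℕ} be a sequence of functions V^r : ℝ → ℝ satisfying V^{r+1}(t) = ∫_t^{t+Δ} U(τ) dτ + V^r(t + Δ) for all r ∈ ℕ and all t ∈ ℝ. Suppose the initial function satisfies V^0(t) ≤ ∫_t^{t+Δ} U(τ) dτ + V^0(t + Δ) for all t ∈ ℝ. Then for every r ∈ ℕ and every t ∈ ℝ, V^r(t) ≤ V^{r+1}(t); i.e., the value-iteration sequence is pointwise nondecreasing. -/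
open MeasureTheory

/-- If the value-iteration sequence satisfies
`V^{r+1}(t) = ∫_t^{t+Δ} U(τ) dτ + V^r(t+Δ)` with nonnegative running cost `U`, and the
initial function is a subsolution, `V^0(t) ≤ ∫_t^{t+Δ} U(τ) dτ + V^0(t+Δ)`, then the
sequence is pointwise nondecreasing: `V^r(t) ≤ V^{r+1}(t)` for all `r` and `t`. -/
theorem stmt_13 (Δ : ℝ) (hΔ : 0 < Δ)
    (U : ℝ → ℝ) (hU : ∀ a b : ℝ, IntegrableOn U (Set.Icc a b))
    (hUnonneg : ∀ τ : ℝ, 0 ≤ U τ)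
    (V : ℕ → ℝ → ℝ)
    (hrec : ∀ r : ℕ, ∀ t : ℝ,
      V (r + 1) t = (∫ τ in t..(t + Δ), U τ) + V r (t + Δ))
    (hsub : ∀ t : ℝ, V 0 t ≤ (∫ τ in t..(t + Δ), U τ) + V 0 (t + Δ)) :
    ∀ r : ℕ, ∀ t : ℝ, V r t ≤ V (r + 1) t := by
  intro r
  induction r with
  | zero => intro t; rw [hrec 0 t]; exact hsub t
  | succ n ih =>
    intro t
    rw [hrec n t, hrec (n + 1) t]
    exact add_le_add_right (ih (t + Δ)) _
end

section
/- Let Δ > 0, let U : ℝ → ℝ be integrable on every compact interval with U(τ) ≥ 0 for all τ and ∫_t^∞ U(τ) dτ ≤ 𝒰 for all t ∈ ℝ (for some constant 𝒰 ≥ 0), and let (V^r)_{r∈ℕ} be a sequence of functions V^r : ℝ → ℝ satisfying V^{r+1}(t) = ∫_t^{t+Δ} U(τ) dτ + V^r(t + Δ) for all r ∈ ℕ and all t ∈ ℝ. Suppose 0 ≤ V^0(t) ≤ M for all t ∈ ℝ (for some constant M ≥ 0) and V^0(t) ≤ ∫_t^{t+Δ} U(τ) dτ + V^0(t + Δ)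 for all t ∈ ℝ. Then for every t ∈ ℝ the sequence (V^r(t))_{r∈ℕ} converges to a limit V*(t) satisfying V^0(t) ≤ V*(t) ≤ M + 𝒰. -/
open MeasureTheory Filter

/-- Under the value-iteration recursion
`V^{r+1}(t) = ∫_t^{t+Δ} U(τ) dτ + V^r(t+Δ)` with nonnegative running cost `U` whose tail
integrals are bounded by `𝒰`, if `0 ≤ V^0 ≤ M` and `V^0` is a subsolution of the integral
Bellman equation, then for every `t` the sequence `(V^r(t))_r` converges to a limit
`V*(t)` with `V^0(t) ≤ V*(t) ≤ M + 𝒰`. -/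
theorem stmt_15 (Δ : ℝ) (hΔ : 0 < Δ)
    (U : ℝ → ℝ) (hU : ∀ a b : ℝ, IntegrableOn U (Set.Icc a b))
    (hUnonneg : ∀ τ : ℝ, 0 ≤ U τ)
    (𝒰 : ℝ) (h𝒰 : 0 ≤ 𝒰)
    (hUint : ∀ t : ℝ, IntegrableOn U (Set.Ici t))
    (htail : ∀ t : ℝ, (∫ τ in Set.Ici t, U τ) ≤ 𝒰)
    (V : ℕ → ℝ → ℝ)
    (hrec : ∀ r : ℕ, ∀ t : ℝ,
      V (r + 1) t = (∫ τ in t..(t + Δ), U τ) + V r (t + Δ))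
    (M : ℝ) (hM : 0 ≤ M)
    (hV0 : ∀ t : ℝ, 0 ≤ V 0 t ∧ V 0 t ≤ M)
    (hsub : ∀ t : ℝ, V 0 t ≤ (∫ τ in t..(t + Δ), U τ) + V 0 (t + Δ)) :
    ∀ t : ℝ, ∃ Vstar : ℝ,
      Tendsto (fun r : ℕ => V r t) atTop (nhds Vstar) ∧
      V 0 t ≤ Vstar ∧ Vstar ≤ M + 𝒰 := by
  have hUi : ∀ a b : ℝ, IntervalIntegrable U volume a b := by
    intro a b
    rw [intervalIntegrable_iff]
    exact (hU (min a b) (max a b)).mono_set Set.Ioc_subset_Icc_self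
  -- monotone step: V (r+1) t ≥ V r t for all t
  have hmono : ∀ r : ℕ, ∀ t : ℝ, V r t ≤ V (r + 1) t := by
    intro r
    induction r with
    | zero => intro t; rw [hrec 0 t]; exact hsub t
    | succ n ih =>
      intro t
      rw [hrec n t, hrec (n + 1) t]
      exact add_le_add_right (ih (t + Δ)) _
  -- bound: V r t ≤ ∫ t..(t + r • Δ) U + M
  have hbound : ∀ r : ℕ, ∀ t : ℝ, V r t ≤ (∫ τ in t..(t + r * Δ), U τ) + M := by
    intro r
    induction r with
    | zero =>
      intro t; simp [(hV0 t).2]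
    | succ n ih =>
      intro t
      rw [hrec n t]
      have h1 : V n (t + Δ) ≤ (∫ τ in (t + Δ)..(t + Δ + n * Δ), U τ) + M := ih (t + Δ)
      have hadj : (∫ τ in t..(t + Δ), U τ) + (∫ τ in (t + Δ)..(t + Δ + n * Δ), U τ)
          = ∫ τ in t..(t + (n + 1 : ℕ) * Δ), U τ := by
        have : (t + (n + 1 : ℕ) * Δ) = t + Δ + n * Δ := by push_cast; ring
        rw [this]
        exact intervalIntegral.integral_add_adjacent_intervals (hUi _ _) (hUi _ _)
      linarith
  -- compare interval integral to tail integral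
  have hintle : ∀ t : ℝ, ∀ r : ℕ, (∫ τ in t..(t + r * Δ), U τ) ≤ 𝒰 := by
    intro t r
    have hle : t ≤ t + r * Δ := by
      have : (0:ℝ) ≤ r * Δ := by positivity
      linarith
    rw [intervalIntegral.integral_of_le hle]
    refine le_trans ?_ (htail t)
    refine setIntegral_mono_set (hUint t) ?_ ?_
    · exact Filter.Eventually.of_forall fun τ => hUnonneg τ
    · exact Filter.Eventually.of_forall fun τ hτ => hτ.1.le
  have hbdd : ∀ r : ℕ, ∀ t : ℝ, V r t ≤ M + 𝒰 := by
    intro r t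
    have := hbound r t
    have := hintle t r
    linarith
  intro t
  have hmono' : Monotone fun r : ℕ => V r t :=
    monotone_nat_of_le_succ fun n => hmono n t
  have hbdd' : BddAbove (Set.range fun r : ℕ => V r t) :=
    ⟨M + 𝒰, by rintro x ⟨r, rfl⟩; exact hbdd r t⟩
  refine ⟨⨆ r : ℕ, V r t, tendsto_atTop_ciSup hmono' hbdd', ?_, ?_⟩
  · exact le_ciSup hbdd' 0
  · exact ciSup_le fun r => hbdd r t
end
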